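/- Under the AS G¹ assumptions, the space Γ₁ = {(0, g₁) ∈ V̂¹_Γ} of admissible transversal-derivative data with vanishing trace equals {0} × S(T^{p−d_α,r}_k,[0,1]), where d_α = max(deg α^{(L)}, deg α^{(R)}), and hence dim Γ₁ = p + k(p−r−1) + (1 − d_α)(k+1). -/
import Mathlib


open Polynomial

/-- The extended knot sequence: `kn 0 = 0`, `kn i = τ i` for `1 ≤ i ≤ k`, and `kn i = 1`
for `i > k`. -/
noncomputable def kn (k : ℕ) (τ : ℕ → ℝ) (i : ℕ) : ℝ :=
  if i = 0 then 0 else if i ≤ k then τ i else 1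

/-- Valid interior knots: `0 < τ 1 < τ 2 < ⋯ < τ k < 1`. -/
def ValidKnots (k : ℕ) (τ : ℕ → ℝ) : Prop :=
  (∀ i, 1 ≤ i → i ≤ k → 0 < τ i ∧ τ i < 1) ∧
  (∀ i j, 1 ≤ i → i < j → j ≤ k → τ i < τ j)

/-- `f : ℝ → ℝ` is a spline of degree `p` with `C^s` smoothness at the `k` interior knots
`τ 1 < ⋯ < τ k` of the open knot vector `T^{p,s}_k` on `[0,1]`:  on each piece
`[kn i, kn (i+1)]` it coincides with a polynomial `P i` of degree at most `p`, the first and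
last pieces being extended polynomially beyond `0` and `1`, and at each interior knot the
derivatives of the adjacent polynomial pieces agree up to order `s`. -/
def SplinePred (p s k : ℕ) (τ : ℕ → ℝ) (f : ℝ → ℝ) : Prop :=
  ∃ P : ℕ → Polynomial ℝ,
    (∀ i, (P i).natDegree ≤ p) ∧
    (∀ i, i ≤ k → ∀ x ∈ Set.Icc (kn k τ i) (kn k τ (i + 1)), f x = (P i).eval x) ∧
    (∀ x : ℝ, x ≤ 0 → f x = (P 0).eval x) ∧
    (∀ x : ℝ, 1 ≤ x → f x = (P k).eval x) ∧
    (∀ i, 1 ≤ i → i ≤ k → ∀ j, j ≤ s →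
      (derivative^[j] (P (i - 1))).eval (τ i) = (derivative^[j] (P i)).eval (τ i))

/-- The spline space `S(T^{p,s}_k, [0,1])` as a subspace of `ℝ → ℝ`. -/
noncomputable def SplineSpace (p s k : ℕ) (τ : ℕ → ℝ) : Submodule ℝ (ℝ → ℝ) where
  carrier := {f | SplinePred p s k τ f}
  add_mem' := by
    rintro a b ⟨P, hPd, hPp, hPl, hPr, hPs⟩ ⟨Q, hQd, hQp, hQl, hQr, hQs⟩
    refine ⟨fun i => P i + Q i, fun i => ?_, fun i hi x hx => ?_, fun x hx => ?_,
      fun x hx => ?_, fun i h1 h2 j hj => ?_⟩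
    · exact le_trans (Polynomial.natDegree_add_le _ _) (max_le (hPd i) (hQd i))
    · simp [Pi.add_apply, hPp i hi x hx, hQp i hi x hx]
    · simp [Pi.add_apply, hPl x hx, hQl x hx]
    · simp [Pi.add_apply, hPr x hx, hQr x hx]
    · have hadd : ∀ (j : ℕ) (P Q : Polynomial ℝ),
          derivative^[j] (P + Q) = derivative^[j] P + derivative^[j] Q := by
        intro j
        induction j with
        | zero => simp
        | succ n ih => intro P Q; simp [Function.iterate_succ_apply, derivative_add, ih]
      simp [hadd, hPs i h1 h2 j hj, hQs i h1 h2 j hj]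
  zero_mem' :=
    ⟨fun _ => 0, by simp, by simp, by simp, by simp, by simp⟩
  smul_mem' := by
    rintro c a ⟨P, hPd, hPp, hPl, hPr, hPs⟩
    refine ⟨fun i => Polynomial.C c * P i, fun i => ?_, fun i hi x hx => ?_, fun x hx => ?_,
      fun x hx => ?_, fun i h1 h2 j hj => ?_⟩
    · exact le_trans (Polynomial.natDegree_C_mul_le _ _) (hPd i)
    · simp [Pi.smul_apply, smul_eq_mul, hPp i hi x hx]
    · simp [Pi.smul_apply, smul_eq_mul, hPl x hx]
    · simp [Pi.smul_apply, smul_eq_mul, hPr x hx]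
    · simp [Polynomial.iterate_derivative_C_mul, hPs i h1 h2 j hj]

section Aux

variable {k : ℕ} {τ : ℕ → ℝ}

lemma dvd_of_derivs {D : Polynomial ℝ} {t : ℝ} {s : ℕ}
    (h : ∀ j ≤ s, (derivative^[j] D).eval t = 0) : (X - C t) ^ (s + 1) ∣ D := by
  by_cases hD : D = 0
  · simp [hD]
  · have hs : s < D.rootMultiplicity t :=
      Polynomial.lt_rootMultiplicity_of_isRoot_iterate_derivative hD (fun m hm => h m hm)
    exact (pow_dvd_pow _ hs).trans (D.pow_rootMultiplicity_dvd t)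

lemma derivs_of_dvd {D : Polynomial ℝ} {t : ℝ} {s : ℕ}
    (h : (X - C t) ^ (s + 1) ∣ D) : ∀ j ≤ s, (derivative^[j] D).eval t = 0 := by
  intro j hj
  by_cases hD : D = 0
  · simp [hD, Polynomial.iterate_derivative_zero]
  · have hs : s + 1 ≤ D.rootMultiplicity t := (Polynomial.le_rootMultiplicity_iff hD).mpr h
    exact Polynomial.isRoot_iterate_derivative_of_lt_rootMultiplicity
      (lt_of_lt_of_le (Nat.lt_succ_of_le hj) hs)

lemma derivs_eq_of_dvd {A B : Polynomial ℝ} {t : ℝ} {s : ℕ}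
    (h : (X - C t) ^ (s + 1) ∣ B - A) :
    ∀ j ≤ s, (derivative^[j] A).eval t = (derivative^[j] B).eval t := by
  intro j hj
  have h2 := derivs_of_dvd h j hj
  rw [Polynomial.iterate_derivative_sub, eval_sub, sub_eq_zero] at h2
  exact h2.symm

lemma tau_mono (hτ : ValidKnots k τ) {a b : ℕ} (ha : 1 ≤ a) (hab : a ≤ b) (hb : b ≤ k) :
    τ a ≤ τ b := by
  rcases eq_or_lt_of_le hab with rfl | h
  · exact le_refl _
  · exact le_of_lt (hτ.2 a b ha h hb)

lemma kn_zero : kn k τ 0 = 0 := by simp [kn]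

lemma kn_eq {i : ℕ} (h1 : 1 ≤ i) (h2 : i ≤ k) : kn k τ i = τ i := by
  have : i ≠ 0 := by omega
  simp [kn, this, h2]

lemma kn_last {i : ℕ} (h : k < i) : kn k τ i = 1 := by
  have : i ≠ 0 := by omega
  have h2 : ¬ (i ≤ k) := by omega
  simp [kn, this, h2]

lemma kn_lt (hτ : ValidKnots k τ) {i : ℕ} (hi : i ≤ k) : kn k τ i < kn k τ (i + 1) := by
  rcases Nat.eq_zero_or_pos i with rfl | hpos
  · rw [kn_zero]
    rcases Nat.eq_zero_or_pos k with rfl | hk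
    · rw [kn_last (by omega)]; norm_num
    · rw [kn_eq le_rfl hk]; exact (hτ.1 1 le_rfl hk).1
  · rw [kn_eq hpos hi]
    rcases eq_or_lt_of_le hi with rfl | hik
    · rw [kn_last (by omega)]; exact (hτ.1 i hpos le_rfl).2
    · rw [kn_eq (by omega) (by omega)]
      exact hτ.2 i (i + 1) hpos (by omega) (by omega)

end Aux

noncomputable def partialPoly (s : ℕ) (τ : ℕ → ℝ) (P : Polynomial ℝ)
    (q : ℕ → Polynomial ℝ) (i : ℕ) : Polynomial ℝ :=
  P + ∑ j ∈ Finset.range i, q j * (X - C (τ (j + 1))) ^ (s + 1)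

noncomputable def phiFun (s k : ℕ) (τ : ℕ → ℝ) (P : Polynomial ℝ)
    (q : ℕ → Polynomial ℝ) : ℝ → ℝ := fun x =>
  P.eval x + ∑ j ∈ Finset.range k,
    if τ (j + 1) ≤ x then (q j * (X - C (τ (j + 1))) ^ (s + 1)).eval x else 0

section Phi

variable {s k : ℕ} {τ : ℕ → ℝ}

lemma phiFun_eq (hτ : ValidKnots k τ) (P : Polynomial ℝ) (q : ℕ → Polynomial ℝ)
    {i : ℕ} (hi : i ≤ k) {x : ℝ}
    (hlo : ∀ j, 1 ≤ j → j ≤ i → τ j ≤ x) (hhi : ∀ j, i < j → j ≤ k → x ≤ τ j) :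
    phiFun s k τ P q x = (partialPoly s τ P q i).eval x := by
  unfold phiFun partialPoly
  rw [eval_add, eval_finset_sum]
  congr 1
  have hsub : Finset.range i ⊆ Finset.range k := Finset.range_subset_range.mpr hi
  have hz : ∀ j ∈ Finset.range k, j ∉ Finset.range i →
      (if τ (j + 1) ≤ x then (q j * (X - C (τ (j + 1))) ^ (s + 1)).eval x else 0) = 0 := by
    intro j hjk hji
    rw [Finset.mem_range] at hjk
    rw [Finset.mem_range, not_lt] at hji
    have hx : x ≤ τ (j + 1) := hhi (j + 1) (by omega) (by omega)
    split_ifs with hc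
    · have hxe : x = τ (j + 1) := le_antisymm hx hc
      rw [eval_mul, eval_pow, eval_sub, eval_X, eval_C, hxe, sub_self,
        zero_pow (by omega), mul_zero]
    · rfl
  rw [← Finset.sum_subset hsub hz]
  refine Finset.sum_congr rfl fun j hj => ?_
  rw [Finset.mem_range] at hj
  exact if_pos (hlo (j + 1) (by omega) (by omega))

lemma phiFun_eq_Icc (hτ : ValidKnots k τ) (P : Polynomial ℝ) (q : ℕ → Polynomial ℝ)
    {i : ℕ} (hi : i ≤ k) {x : ℝ} (hx : x ∈ Set.Icc (kn k τ i) (kn k τ (i + 1))) :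
    phiFun s k τ P q x = (partialPoly s τ P q i).eval x := by
  refine phiFun_eq hτ P q hi (fun j h1 h2 => ?_) (fun j h1 h2 => ?_)
  · calc τ j ≤ τ i := tau_mono hτ h1 h2 hi
      _ = kn k τ i := (kn_eq (by omega) hi).symm
      _ ≤ x := hx.1
  · calc x ≤ kn k τ (i + 1) := hx.2
      _ = τ (i + 1) := kn_eq (by omega) (by omega)
      _ ≤ τ j := tau_mono hτ (by omega) (by omega) h2

lemma phiFun_eq_left (hτ : ValidKnots k τ) (P : Polynomial ℝ) (q : ℕ → Polynomial ℝ)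
    {x : ℝ} (hx : x ≤ 0) : phiFun s k τ P q x = (partialPoly s τ P q 0).eval x := by
  refine phiFun_eq hτ P q (Nat.zero_le k) (fun j h1 h2 => by omega) (fun j h1 h2 => ?_)
  exact le_of_lt (lt_of_le_of_lt hx (hτ.1 j (by omega) h2).1)

lemma phiFun_eq_right (hτ : ValidKnots k τ) (P : Polynomial ℝ) (q : ℕ → Polynomial ℝ)
    {x : ℝ} (hx : 1 ≤ x) : phiFun s k τ P q x = (partialPoly s τ P q k).eval x := by
  refine phiFun_eq hτ P q le_rfl (fun j h1 h2 => ?_) (fun j h1 h2 => by omega)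
  exact le_of_lt (lt_of_lt_of_le (hτ.1 j h1 h2).2 hx)

lemma partialPoly_natDegree {p' : ℕ} (hs : s + 1 ≤ p') {P : Polynomial ℝ}
    {q : ℕ → Polynomial ℝ} (hP : P.natDegree ≤ p')
    (hq : ∀ j, (q j).natDegree ≤ p' - s - 1) (i : ℕ) :
    (partialPoly s τ P q i).natDegree ≤ p' := by
  refine le_trans (Polynomial.natDegree_add_le _ _) (max_le hP ?_)
  refine Polynomial.natDegree_sum_le_of_forall_le _ _ fun j _ => ?_
  refine le_trans (Polynomial.natDegree_mul_le) ?_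
  have h1 : ((X - C (τ (j + 1))) ^ (s + 1)).natDegree ≤ s + 1 := by
    refine le_trans (Polynomial.natDegree_pow_le) ?_
    rw [Polynomial.natDegree_X_sub_C]; omega
  have := hq j
  omega

lemma partialPoly_succ (P : Polynomial ℝ) (q : ℕ → Polynomial ℝ) (i : ℕ) :
    partialPoly s τ P q (i + 1) =
      partialPoly s τ P q i + q i * (X - C (τ (i + 1))) ^ (s + 1) := by
  unfold partialPoly
  rw [Finset.sum_range_succ, add_assoc]

lemma phiFun_splinePred {p' : ℕ} (hτ : ValidKnots k τ) (hs : s + 1 ≤ p')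
    {P : Polynomial ℝ} {q : ℕ → Polynomial ℝ} (hP : P.natDegree ≤ p')
    (hq : ∀ j, (q j).natDegree ≤ p' - s - 1) :
    SplinePred p' s k τ (phiFun s k τ P q) := by
  refine ⟨fun i => partialPoly s τ P q (min i k), ?_, ?_, ?_, ?_, ?_⟩
  · intro i; exact partialPoly_natDegree hs hP hq _
  · intro i hi x hx
    simp only [min_eq_left hi]
    exact phiFun_eq_Icc hτ P q hi hx
  · intro x hx
    simp only [min_eq_left (Nat.zero_le k)]
    exact phiFun_eq_left hτ P q hx
  · intro x hx
    simp only [min_self]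
    exact phiFun_eq_right hτ P q hx
  · intro i h1 h2 j hj
    simp only [min_eq_left h2, min_eq_left (le_trans (Nat.sub_le i 1) h2)]
    have hi1 : i - 1 + 1 = i := by omega
    refine derivs_eq_of_dvd ?_ j hj
    have : partialPoly s τ P q i - partialPoly s τ P q (i - 1)
        = q (i - 1) * (X - C (τ i)) ^ (s + 1) := by
      conv_lhs => rw [← hi1, partialPoly_succ, hi1]
      ring
    rw [this]
    exact Dvd.intro_left _ rfl

lemma phiFun_zero (hτ : ValidKnots k τ) {P : Polynomial ℝ} {q : ℕ → Polynomial ℝ}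
    (h : phiFun s k τ P q = 0) : P = 0 ∧ ∀ j < k, q j = 0 := by
  have key : ∀ i ≤ k, partialPoly s τ P q i = 0 := by
    intro i hi
    refine Polynomial.eq_of_infinite_eval_eq _ _ ?_
    refine Set.Infinite.mono ?_ (Set.Icc_infinite (kn_lt hτ hi))
    intro x hx
    have := phiFun_eq_Icc (s := s) hτ P q hi hx
    simp only [Set.mem_setOf_eq, eval_zero]
    rw [← this, h]
    rfl
  have hP : P = 0 := by
    have := key 0 (Nat.zero_le k)
    simpa [partialPoly] using this
  refine ⟨hP, fun j hj => ?_⟩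
  have h1 := key j (by omega)
  have h2 := key (j + 1) (by omega)
  rw [partialPoly_succ, h1, zero_add] at h2
  rcases mul_eq_zero.mp h2 with h3 | h3
  · exact h3
  · exact absurd h3 (pow_ne_zero _ (Polynomial.X_sub_C_ne_zero _))

end Phi

section LM

variable {s k n m : ℕ} {τ : ℕ → ℝ}

/-- Extend a `Fin k`-tuple of polynomials by zero. -/
noncomputable def qext (k : ℕ) {m : ℕ} (q : Fin k → Polynomial.degreeLT ℝ m) :
    ℕ → Polynomial ℝ := fun j => if h : j < k then (q ⟨j, h⟩ : Polynomial ℝ) else 0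

lemma qext_add (q q' : Fin k → Polynomial.degreeLT ℝ m) :
    qext k (q + q') = fun j => qext k q j + qext k q' j := by
  funext j
  unfold qext
  split_ifs with h
  · simp
  · simp

lemma qext_smul (c : ℝ) (q : Fin k → Polynomial.degreeLT ℝ m) :
    qext k (c • q) = fun j => Polynomial.C c * qext k q j := by
  funext j
  unfold qext
  split_ifs with h
  · simp [Polynomial.smul_eq_C_mul]
  · simp

noncomputable def phiLM (n m s k : ℕ) (τ : ℕ → ℝ) :
    (Polynomial.degreeLT ℝ n × (Fin k → Polynomial.degreeLT ℝ m)) →ₗ[ℝ] (ℝ → ℝ) where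
  toFun Pq := phiFun s k τ (Pq.1 : Polynomial ℝ) (qext k Pq.2)
  map_add' a b := by
    funext x
    simp only [Prod.fst_add, Prod.snd_add, Submodule.coe_add, Pi.add_apply]
    unfold phiFun
    rw [qext_add, eval_add]
    have : ∀ j ∈ Finset.range k,
        (if τ (j + 1) ≤ x then ((qext k a.2 j + qext k b.2 j) * (X - C (τ (j + 1))) ^ (s + 1)).eval x else 0)
        = (if τ (j + 1) ≤ x then (qext k a.2 j * (X - C (τ (j + 1))) ^ (s + 1)).eval x else 0)
        + (if τ (j + 1) ≤ x then (qext k b.2 j * (X - C (τ (j + 1))) ^ (s + 1)).eval x else 0) := by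
      intro j _
      split_ifs with h
      · rw [add_mul, eval_add]
      · rw [add_zero]
    rw [Finset.sum_congr rfl this, Finset.sum_add_distrib]
    ring
  map_smul' c a := by
    funext x
    simp only [Prod.smul_fst, Prod.smul_snd, SetLike.val_smul, RingHom.id_apply, Pi.smul_apply,
      smul_eq_mul]
    unfold phiFun
    rw [qext_smul]
    have : ∀ j ∈ Finset.range k,
        (if τ (j + 1) ≤ x then ((Polynomial.C c * qext k a.2 j) * (X - C (τ (j + 1))) ^ (s + 1)).eval x else 0)
        = c * (if τ (j + 1) ≤ x then (qext k a.2 j * (X - C (τ (j + 1))) ^ (s + 1)).eval x else 0) := by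
      intro j _
      split_ifs with h
      · rw [mul_assoc, eval_mul, eval_C]
      · rw [mul_zero]
    rw [Finset.sum_congr rfl this, ← Finset.mul_sum, Polynomial.eval_smul]
    simp [mul_add]

lemma mem_degreeLT_of_natDegree_le {f : Polynomial ℝ} {n : ℕ} (h : f.natDegree ≤ n) :
    f ∈ Polynomial.degreeLT ℝ (n + 1) := by
  rw [Polynomial.mem_degreeLT]
  calc f.degree ≤ (f.natDegree : WithBot ℕ) := Polynomial.degree_le_natDegree
    _ < ((n + 1 : ℕ) : WithBot ℕ) := by exact_mod_cast Nat.lt_succ_of_le h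

lemma natDegree_le_of_mem_degreeLT {f : Polynomial ℝ} {n : ℕ} (hn : 1 ≤ n)
    (h : f ∈ Polynomial.degreeLT ℝ n) : f.natDegree ≤ n - 1 := by
  rw [Polynomial.mem_degreeLT] at h
  by_cases hf : f = 0
  · simp [hf]
  · have := (Polynomial.natDegree_lt_iff_degree_lt hf).mpr h
    omega

lemma splineSpace_eq_range (hτ : ValidKnots k τ) {p' : ℕ} (hs : s + 1 ≤ p') :
    LinearMap.range (phiLM (p' + 1) (p' - s) s k τ) = SplineSpace p' s k τ := by
  apply le_antisymm
  · rintro f ⟨⟨P, q⟩, rfl⟩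
    show SplinePred p' s k τ _
    refine phiFun_splinePred hτ hs (natDegree_le_of_mem_degreeLT (by omega) P.2) ?_
    intro j
    unfold qext
    split_ifs with h
    · have h2 := natDegree_le_of_mem_degreeLT (n := p' - s) (by omega) (q ⟨j, h⟩).2
      exact h2
    · simp
  · rintro f ⟨P, hPd, hPp, hPl, hPr, hPs⟩
    have hdvd : ∀ i, 1 ≤ i → i ≤ k → ∃ c : Polynomial ℝ,
        P i = P (i - 1) + (X - C (τ i)) ^ (s + 1) * c ∧ c.natDegree ≤ p' - s - 1 := by
      intro i h1 h2
      obtain ⟨c, hc⟩ := dvd_of_derivs (D := P i - P (i - 1)) (t := τ i) (s := s)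
        (fun j hj => by
          rw [Polynomial.iterate_derivative_sub, eval_sub, hPs i h1 h2 j hj, sub_self])
      refine ⟨c, by rw [← hc]; ring, ?_⟩
      by_cases hc0 : c = 0
      · simp [hc0]
      · have hne : ((X - C (τ i)) ^ (s + 1) : Polynomial ℝ) ≠ 0 :=
          pow_ne_zero _ (Polynomial.X_sub_C_ne_zero _)
        have hdeg : (P i - P (i - 1)).natDegree = (s + 1) + c.natDegree := by
          rw [hc, Polynomial.natDegree_mul hne hc0, Polynomial.natDegree_pow,
            Polynomial.natDegree_X_sub_C, mul_one]
        have hle : (P i - P (i - 1)).natDegree ≤ p' :=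
          le_trans (Polynomial.natDegree_sub_le _ _) (max_le (hPd i) (hPd (i - 1)))
        omega
    classical
    choose! c hc1 hc2 using hdvd
    set qn : ℕ → Polynomial ℝ := fun j => if j + 1 ≤ k then c (j + 1) else 0 with hqn
    have hqnd : ∀ j, (qn j).natDegree ≤ p' - s - 1 := by
      intro j
      show (if j + 1 ≤ k then c (j + 1) else 0).natDegree ≤ p' - s - 1
      split_ifs with h
      · exact hc2 (j + 1) (by omega) h
      · simp
    have hpart : ∀ i ≤ k, partialPoly s τ (P 0) qn i = P i := by
      intro i
      induction i with
      | zero => intro _; simp [partialPoly]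
      | succ j ih =>
        intro hjk
        rw [partialPoly_succ, ih (by omega)]
        have hq : qn j = c (j + 1) := if_pos hjk
        have e := hc1 (j + 1) (by omega) hjk
        rw [Nat.add_sub_cancel] at e
        rw [hq, e]
        ring
    refine ⟨⟨⟨P 0, mem_degreeLT_of_natDegree_le (hPd 0)⟩,
        fun j => ⟨qn j, ?_⟩⟩, ?_⟩
    · have : p' - s - 1 + 1 = p' - s := by omega
      rw [← this]
      exact mem_degreeLT_of_natDegree_le (hqnd j)
    · funext x
      show phiFun s k τ (P 0) _ x = f x
      have hqe : qext k (fun j : Fin k => (⟨qn j, by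
          have : p' - s - 1 + 1 = p' - s := by omega
          rw [← this]
          exact mem_degreeLT_of_natDegree_le (hqnd j)⟩ : Polynomial.degreeLT ℝ (p' - s)))
          = qn := by
        funext j
        unfold qext
        split_ifs with h
        · rfl
        · exact (if_neg (by omega : ¬ j + 1 ≤ k)).symm
      rw [hqe]
      rcases le_or_gt x 0 with hx | hx
      · rw [phiFun_eq_left hτ _ _ hx, hpart 0 (Nat.zero_le k), ← hPl x hx]
      rcases le_or_gt 1 x with hx1 | hx1
      · rw [phiFun_eq_right hτ _ _ hx1, hpart k le_rfl, ← hPr x hx1]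
      -- covering
      have hPp0 : (fun j => kn k τ j ≤ x) 0 := by show kn k τ 0 ≤ x; rw [kn_zero]; exact le_of_lt hx
      set i := Nat.findGreatest (fun j => kn k τ j ≤ x) k with hi
      have hik : i ≤ k := Nat.findGreatest_le k
      have hlo : kn k τ i ≤ x :=
        Nat.findGreatest_spec (P := fun j => kn k τ j ≤ x) (Nat.zero_le k) hPp0
      have hhi : x ≤ kn k τ (i + 1) := by
        rcases eq_or_lt_of_le hik with heq | hik'
        · rw [heq, kn_last (by omega)]; exact le_of_lt hx1
        · have h3 := Nat.findGreatest_is_greatest (P := fun j => kn k τ j ≤ x)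
            (n := k) (k := i + 1) (by omega) (by omega)
          exact le_of_not_ge h3
      rw [phiFun_eq_Icc hτ _ _ hik ⟨hlo, hhi⟩, hpart i hik, ← hPp i hik x ⟨hlo, hhi⟩]

end LM

section Dim

variable {s k : ℕ} {τ : ℕ → ℝ}

lemma phiLM_injective (hτ : ValidKnots k τ) (n m : ℕ) :
    Function.Injective (phiLM n m s k τ) := by
  rw [← LinearMap.ker_eq_bot, eq_bot_iff]
  rintro ⟨P, q⟩ hker
  have h0 : phiFun s k τ (P : Polynomial ℝ) (qext k q) = 0 := hker
  obtain ⟨hP, hq⟩ := phiFun_zero hτ h0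
  have hqz : ∀ j : Fin k, q j = 0 := by
    intro j
    have := hq j j.2
    unfold qext at this
    rw [dif_pos j.2] at this
    exact Subtype.ext (by simpa using this)
  simp only [Submodule.mem_bot]
  refine Prod.ext ?_ ?_
  · exact Subtype.ext (by simpa using hP)
  · funext j; simpa using hqz j

noncomputable instance (n : ℕ) : FiniteDimensional ℝ (Polynomial.degreeLT ℝ n) :=
  Module.Finite.equiv (Polynomial.degreeLTEquiv ℝ n).symm

lemma splineSpace_finrank (p' s k : ℕ) (τ : ℕ → ℝ) (hτ : ValidKnots k τ)
    (hs : s + 1 ≤ p') :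
    Module.finrank ℝ (SplineSpace p' s k τ) = (p' + 1) + k * (p' - s) := by
  have hr := splineSpace_eq_range (s := s) hτ hs
  rw [← hr]
  rw [LinearMap.finrank_range_of_inj (phiLM_injective hτ (p' + 1) (p' - s))]
  rw [Module.finrank_prod]
  have h1 : ∀ n : ℕ, Module.finrank ℝ (Polynomial.degreeLT ℝ n) = n := by
    intro n
    rw [(Polynomial.degreeLTEquiv ℝ n).finrank_eq, Module.finrank_fin_fun]
  rw [h1]
  congr 1
  rw [Module.finrank_pi_fintype, Finset.sum_congr rfl (fun j _ => h1 (p' - s)),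
    Finset.sum_const, Finset.card_univ, Fintype.card_fin, smul_eq_mul]

end Dim

section Part1

variable {k p p' r : ℕ} {τ : ℕ → ℝ}

lemma splinePred_weaken {s' s g} (hs : s' ≤ s) (h : SplinePred p s k τ g) :
    SplinePred p s' k τ g := by
  obtain ⟨P, h1, h2, h3, h4, h5⟩ := h
  exact ⟨P, h1, h2, h3, h4, fun i hi1 hi2 j hj => h5 i hi1 hi2 j (le_trans hj hs)⟩

lemma splinePred_mul {s g} (α : Polynomial ℝ) (hd : α.natDegree + p' ≤ p)
    (h : SplinePred p' s k τ g) :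
    SplinePred p s k τ (fun v => α.eval v * g v) := by
  obtain ⟨P, h1, h2, h3, h4, h5⟩ := h
  refine ⟨fun i => α * P i, ?_, ?_, ?_, ?_, ?_⟩
  · intro i
    exact le_trans (Polynomial.natDegree_mul_le) (by have := h1 i; omega)
  · intro i hi x hx
    rw [eval_mul, ← h2 i hi x hx]
  · intro x hx
    rw [eval_mul, ← h3 x hx]
  · intro x hx
    rw [eval_mul, ← h4 x hx]
  · intro i hi1 hi2 j hj
    refine derivs_eq_of_dvd ?_ j hj
    have hdvd : (X - C (τ i)) ^ (s + 1) ∣ (P i - P (i - 1)) :=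
      dvd_of_derivs (fun j' hj' => by
        rw [Polynomial.iterate_derivative_sub, eval_sub, h5 i hi1 hi2 j' hj', sub_self])
    have he : α * P i - α * P (i - 1) = α * (P i - P (i - 1)) := by ring
    rw [he]
    exact Dvd.dvd.mul_left hdvd α

lemma top_deriv_mul {α D : Polynomial ℝ} {t : ℝ} {r : ℕ}
    (hD : ∀ j < r, (derivative^[j] D).eval t = 0) :
    (derivative^[r] (α * D)).eval t = α.eval t * (derivative^[r] D).eval t := by
  rw [Polynomial.iterate_derivative_mul, eval_finset_sum]
  rw [Finset.sum_eq_single_of_mem r (Finset.self_mem_range_succ r)]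
  · rw [Nat.choose_self, one_smul, Nat.sub_self, eval_mul]
    simp
  · intro b hb hbr
    rw [Finset.mem_range] at hb
    have hblt : b < r := by omega
    rw [Polynomial.eval_smul, eval_mul, hD b hblt, mul_zero, smul_zero]

end Part1

lemma splinePred_of_mul {k p p' r : ℕ} {τ : ℕ → ℝ} (hτ : ValidKnots k τ) (hr1 : 1 ≤ r)
    {αL αR : Polynomial ℝ} (hcop : IsCoprime αL αR) {g : ℝ → ℝ}
    (h0 : SplinePred p' (r - 1) k τ g)
    (hL : SplinePred p r k τ (fun v => αL.eval v * g v))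
    (hR : SplinePred p r k τ (fun v => αR.eval v * g v)) :
    SplinePred p' r k τ g := by
  obtain ⟨P, hPd, hPp, hPl, hPr, hPs⟩ := h0
  refine ⟨P, hPd, hPp, hPl, hPr, ?_⟩
  intro i h1 h2 j hj
  by_cases hjr : j = r
  swap
  · exact hPs i h1 h2 j (by omega)
  subst hjr
  -- lower derivatives of the jump vanish
  have hD : ∀ j' < j, (derivative^[j'] (P i - P (i - 1))).eval (τ i) = 0 := by
    intro j' hj'
    rw [Polynomial.iterate_derivative_sub, eval_sub, hPs i h1 h2 j' (by omega), sub_self]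
  -- for each α, the top derivative relation
  have key : ∀ (α : Polynomial ℝ), SplinePred p j k τ (fun v => α.eval v * g v) →
      α.eval (τ i) * (derivative^[j] (P i - P (i - 1))).eval (τ i) = 0 := by
    intro α hA
    obtain ⟨Q, hQd, hQp, hQl, hQr, hQs⟩ := hA
    have huniq : ∀ i' ≤ k, Q i' = α * P i' := by
      intro i' hi'
      refine Polynomial.eq_of_infinite_eval_eq _ _ ?_
      refine Set.Infinite.mono ?_ (Set.Icc_infinite (kn_lt hτ hi'))
      intro x hx
      simp only [Set.mem_setOf_eq, eval_mul]
      rw [← hQp i' hi' x hx, ← hPp i' hi' x hx]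
    have hs := hQs i h1 h2 j le_rfl
    rw [huniq i h2, huniq (i - 1) (by omega)] at hs
    have hsub : (derivative^[j] (α * P i - α * P (i - 1))).eval (τ i) = 0 := by
      rw [Polynomial.iterate_derivative_sub, eval_sub, hs, sub_self]
    have he : α * P i - α * P (i - 1) = α * (P i - P (i - 1)) := by ring
    rw [he, top_deriv_mul hD] at hsub
    exact hsub
  have hLz := key αL hL
  have hRz := key αR hR
  by_contra hne
  have hne' : (derivative^[j] (P i - P (i - 1))).eval (τ i) ≠ 0 := by
    intro hzz
    apply hne
    rw [Polynomial.iterate_derivative_sub, eval_sub, sub_eq_zero] at hzz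
    exact hzz.symm
  have hαL0 : αL.eval (τ i) = 0 := by
    rcases mul_eq_zero.mp hLz with h | h
    · exact h
    · exact absurd h hne'
  have hαR0 : αR.eval (τ i) = 0 := by
    rcases mul_eq_zero.mp hRz with h | h
    · exact h
    · exact absurd h hne'
  obtain ⟨u, v, huv⟩ := hcop
  have := congrArg (Polynomial.eval (τ i)) huv
  simp only [eval_add, eval_mul, eval_one, hαL0, hαR0, mul_zero] at this
  norm_num at this


/-- Under the AS G¹ assumptions, the space `Γ₁` of admissible transversal-derivative data
with vanishing trace, i.e. the set of `g₁` such that `(0, g₁) ∈ V̂¹_Γ` (characterized by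
`g₁ ∈ S(T^{p−d_α,r−1}_k)` and `α^{(S)}·g₁ ∈ S(T^{p,r}_k)` for `S ∈ {L,R}`), equals the spline
space `S(T^{p−d_α,r}_k, [0,1])`, where `d_α = max(deg αL, deg αR)`; hence its dimension is
`p + k(p−r−1) + (1 − d_α)(k+1)`. -/
theorem stmt9 (p r k : ℕ) (τ : ℕ → ℝ) (hτ : ValidKnots k τ)
    (hp : 3 ≤ p) (hr1 : 1 ≤ r) (hrp : r + 1 < p)
    (αL αR : Polynomial ℝ)
    (hαL : αL.natDegree ≤ 1) (hαR : αR.natDegree ≤ 1)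
    (hcop : IsCoprime αL αR) :
    {g₁ : ℝ → ℝ |
        SplinePred (p - max αL.natDegree αR.natDegree) (r - 1) k τ g₁ ∧
        SplinePred p r k τ (fun v => αL.eval v * g₁ v) ∧
        SplinePred p r k τ (fun v => αR.eval v * g₁ v)}
      = (SplineSpace (p - max αL.natDegree αR.natDegree) r k τ : Set (ℝ → ℝ)) ∧
    Module.finrank ℝ (SplineSpace (p - max αL.natDegree αR.natDegree) r k τ)
      = p + k * (p - r - 1) + (1 - max αL.natDegree αR.natDegree) * (k + 1) := by
  have hdL : αL.natDegree ≤ max αL.natDegree αR.natDegree := le_max_left _ _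
  have hdR : αR.natDegree ≤ max αL.natDegree αR.natDegree := le_max_right _ _
  have hd1 : max αL.natDegree αR.natDegree ≤ 1 := max_le hαL hαR
  set d := max αL.natDegree αR.natDegree with hd
  have hs : r + 1 ≤ p - d := by omega
  constructor
  · ext g
    simp only [Set.mem_setOf_eq, SetLike.mem_coe]
    have hmem : g ∈ SplineSpace (p - d) r k τ ↔ SplinePred (p - d) r k τ g := Iff.rfl
    rw [hmem]
    constructor
    · rintro ⟨h0, hL, hR⟩
      exact splinePred_of_mul hτ hr1 hcop h0 hL hR
    · intro h
      exact ⟨splinePred_weaken (by omega) h,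
        splinePred_mul αL (by omega) h, splinePred_mul αR (by omega) h⟩
  · rw [splineSpace_finrank (p - d) r k τ hτ hs]
    rcases Nat.le_one_iff_eq_zero_or_eq_one.mp hd1 with h | h
    · rw [h]
      rw [Nat.sub_zero]
      have e' : k * (p - r) = k * (p - r - 1) + k := by
        conv_lhs => rw [show p - r = (p - r - 1) + 1 by omega, Nat.mul_add, Nat.mul_one]
      rw [e']
      generalize k * (p - r - 1) = m
      omega
    · rw [h]
      have e1 : p - 1 - r = p - r - 1 := by omega
      have e2 : p - 1 + 1 = p := by omega
      rw [e1, e2]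
      simp
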